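/- Let A be an alphabet with at least two letters. There exists no set S of substitutions of A* such that A^ω is exactly the set of all S-adic words. Moreover, any set S of substitutions with A^ω equal to the stable set of S must contain a permutation (a morphism f with f(A) = A). -/

import Mathlib

universe u
variable {A : Type u}

/-- Apply a substitution (given by images of letters) to a finite word. -/
def applyList (f : A → List A) (u : List A) : List A := u.flatMap f

/-- Starting position of the image of the `n`-th letter of `v` inside `f(v)`. -/
def blockStart (f : A → List A) (v : ℕ → A) : ℕ → ℕ
  | 0 => 0
  | n + 1 => blockStart f v n + (f (v n)).length

/-- `ApplyEq f v u` means `u = f(v)` for right-infinite words. -/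
def ApplyEq (f : A → List A) (v u : ℕ → A) : Prop :=
  ∀ (n i : ℕ) (h : i < (f (v n)).length),
    u (blockStart f v n + i) = (f (v n))[i]

/-- `u` occurs as a factor of `w` at position `k`. -/
def FactorAt (w : ℕ → A) (u : List A) (k : ℕ) : Prop :=
  ∀ (i : ℕ) (h : i < u.length), u[i] = w (k + i)

def Factor (w : ℕ → A) (u : List A) : Prop := ∃ k, FactorAt w u k

/-- `u` is a prefix of the infinite word `w`. -/
def PrefixOf (u : List A) (w : ℕ → A) : Prop :=
  ∀ (i : ℕ) (h : i < u.length), u[i] = w i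

/-- Membership in the stable set of a set `S` of substitutions. -/
def InStable (S : Set (A → List A)) (w : ℕ → A) : Prop :=
  ∃ (σ : ℕ → A → List A) (ws : ℕ → ℕ → A),
    (∀ n, σ n ∈ S) ∧ ws 0 = w ∧ ∀ n, ApplyEq (σ n) (ws (n + 1)) (ws n)

/-- Composition `σ_1 ∘ ⋯ ∘ σ_n` of the first `n` substitutions of `s` (0-indexed). -/
def compSeq (s : ℕ → A → List A) : ℕ → A → List A
  | 0 => fun a => [a]
  | n + 1 => fun a => applyList (compSeq s n) (s n a)

/-- `w` is S-adic with directive sequence `σ`. -/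
def SAdicWith (σ : ℕ → A → List A) (w : ℕ → A) : Prop :=
  ∃ a : ℕ → A, (∀ n, PrefixOf (compSeq σ n (a n)) w) ∧
    ∀ N : ℕ, ∃ n, N ≤ (compSeq σ n (a n)).length


namespace Stmt11Aux

open List

variable {A : Type u}

/-- The prefix of length `t` of an infinite word, as a list. -/
def prefList (v : ℕ → A) (t : ℕ) : List A := (List.range t).map v

@[simp] lemma prefList_length (v : ℕ → A) (t : ℕ) : (prefList v t).length = t := by
  simp [prefList]

lemma prefList_getElem (v : ℕ → A) (t i : ℕ) (h : i < (prefList v t).length) :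
    (prefList v t)[i] = v i := by
  simp [prefList]

lemma prefList_succ (v : ℕ → A) (t : ℕ) :
    prefList v (t + 1) = prefList v t ++ [v t] := by
  simp [prefList, List.range_succ]

lemma eq_prefList {v : ℕ → A} {p : List A} (h : ∀ i (hi : i < p.length), p[i] = v i) :
    p = prefList v p.length := by
  apply List.ext_getElem (by simp)
  intro i h1 h2
  rw [prefList_getElem]
  exact h i h1

@[simp] lemma applyList_nil (f : A → List A) : applyList f [] = [] := rfl

lemma applyList_cons (f : A → List A) (c : A) (l : List A) :
    applyList f (c :: l) = f c ++ applyList f l := by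
  simp [applyList]

lemma applyList_append (f : A → List A) (u v : List A) :
    applyList f (u ++ v) = applyList f u ++ applyList f v := by
  simp [applyList]

@[simp] lemma applyList_singleton (f : A → List A) (a : A) : applyList f [a] = f a := by
  simp [applyList]

lemma applyList_id (l : List A) : applyList (fun a => [a]) l = l := by
  simp [applyList]

lemma applyList_applyList (f g : A → List A) (l : List A) :
    applyList f (applyList g l) = applyList (fun a => applyList f (g a)) l := by
  simp [applyList, List.flatMap_assoc]

lemma length_le_applyList {f : A → List A} (hf : ∀ c, f c ≠ []) (l : List A) :
    l.length ≤ (applyList f l).length := by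
  induction l with
  | nil => simp
  | cons c l ih =>
    rw [applyList_cons, List.length_append, List.length_cons]
    have : 1 ≤ (f c).length := List.length_pos_iff.mpr (hf c)
    omega

lemma applyList_ne_nil {f : A → List A} (hf : ∀ c, f c ≠ []) {l : List A} (hl : l ≠ []) :
    applyList f l ≠ [] := by
  intro h
  rw [applyList, List.flatMap_eq_nil_iff] at h
  rcases l with _ | ⟨c, l⟩
  · exact hl rfl
  · exact hf c (h c (by simp))

lemma compSeq_zero (s : ℕ → A → List A) (a : A) : compSeq s 0 a = [a] := rfl

lemma compSeq_succ (s : ℕ → A → List A) (n : ℕ) (a : A) :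
    compSeq s (n + 1) a = applyList (compSeq s n) (s n a) := rfl

lemma compSeq_ne_nil {s : ℕ → A → List A} (hs : ∀ n c, s n c ≠ []) :
    ∀ n a, compSeq s n a ≠ [] := by
  intro n
  induction n with
  | zero => intro a; simp [compSeq_zero]
  | succ n ih => intro a; exact applyList_ne_nil (fun c => ih c) (hs n a)

lemma compSeq_shift (s : ℕ → A → List A) (m : ℕ) :
    ∀ (d : ℕ) (a : A), compSeq s (m + d) a
      = applyList (compSeq s m) (compSeq (fun i => s (m + i)) d a) := by
  intro d
  induction d with
  | zero => intro a; simp [compSeq_zero]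
  | succ d ih =>
    intro a
    show compSeq s ((m + d) + 1) a = _
    rw [compSeq_succ, compSeq_succ, applyList_applyList]
    have : (compSeq s (m + d)) = fun x => applyList (compSeq s m) (compSeq (fun i => s (m + i)) d x) := by
      funext x; exact ih x
    rw [this]

lemma blockStart_eq_length (f : A → List A) (v : ℕ → A) :
    ∀ t, blockStart f v t = (applyList f (prefList v t)).length := by
  intro t
  induction t with
  | zero => simp [blockStart, prefList]
  | succ t ih =>
    rw [show blockStart f v (t+1) = blockStart f v t + (f (v t)).length from rfl,
      prefList_succ, applyList_append, List.length_append, ih, applyList_singleton]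

lemma applyEq_prefList {f : A → List A} {v u : ℕ → A} (h : ApplyEq f v u) :
    ∀ t i (hi : i < (applyList f (prefList v t)).length),
      (applyList f (prefList v t))[i] = u i := by
  intro t
  induction t with
  | zero => intro i hi; simp [prefList] at hi
  | succ t ih =>
    intro i hi
    have e : applyList f (prefList v (t+1)) = applyList f (prefList v t) ++ f (v t) := by
      rw [prefList_succ, applyList_append, applyList_singleton]
    rw [List.getElem_of_eq e]
    rw [e] at hi
    rcases Nat.lt_or_ge i (applyList f (prefList v t)).length with h1 | h1
    · rw [List.getElem_append_left h1]
      exact ih i h1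
    · rw [List.getElem_append_right h1]
      have hlt : i - (applyList f (prefList v t)).length < (f (v t)).length := by
        rw [List.length_append] at hi; omega
      rw [← h t _ hlt, blockStart_eq_length]
      congr 1
      omega

end Stmt11Aux

namespace Stmt11Aux

open List

variable {A : Type u}

/-- Case (a) helper: if every image of `g` contains a letter `≠ x`, then no
`applyList g l` starts with `x^(L+1)`. -/
lemma bar_a1 {g : A → List A} {L : ℕ} (hL : ∀ c, (g c).length ≤ L) {x : A}
    (hx : ∀ c, ∃ y ∈ g c, y ≠ x) :
    ∀ (l rest : List A), applyList g l ≠ List.replicate (L + 1) x ++ rest := by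
  intro l rest heq
  cases l with
  | nil =>
    have := congrArg List.length heq
    simp at this
    omega
  | cons c l' =>
    obtain ⟨y, hy, hyx⟩ := hx c
    obtain ⟨i, hi, hgi⟩ := List.mem_iff_getElem.mp hy
    apply hyx
    rw [applyList_cons] at heq
    have hiL : i < L + 1 := lt_of_lt_of_le hi (le_trans (hL c) (Nat.le_succ L))
    have hlen : i < (g c ++ applyList g l').length := by
      rw [List.length_append]; omega
    have h1 : (g c ++ applyList g l')[i] = y := by
      rw [List.getElem_append_left hi]; exact hgi
    rw [List.getElem_of_eq heq] at h1
    rw [List.getElem_append_left (by rw [List.length_replicate]; omega)] at h1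
    rw [List.getElem_replicate] at h1
    exact h1.symm

/-- Case (a): `x^(2L+2)` is not an infix of any `applyList g l`. -/
lemma bar_a2 {g : A → List A} {L : ℕ} (hL : ∀ c, (g c).length ≤ L) {x : A}
    (hx : ∀ c, ∃ y ∈ g c, y ≠ x) :
    ∀ (l s t : List A), applyList g l ≠ s ++ List.replicate (2*L + 2) x ++ t := by
  intro l
  induction l with
  | nil =>
    intro s t heq
    have := congrArg List.length heq
    simp at this
    omega
  | cons c l' ih =>
    intro s t heq
    rw [applyList_cons, List.append_assoc] at heq
    have h0 : applyList g l'
        = List.drop (g c).length (s ++ (List.replicate (2*L + 2) x ++ t)) := by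
      rw [← heq, List.drop_left]
    rcases le_or_gt (g c).length s.length with h | h
    · rw [List.drop_append, Nat.sub_eq_zero_of_le h, List.drop_zero,
        ← List.append_assoc] at h0
      exact ih _ _ h0
    · rw [List.drop_append,
        List.drop_eq_nil_of_le (le_of_lt h), List.nil_append,
        List.drop_append, List.drop_replicate,
        List.length_replicate] at h0
      have e0 : (g c).length - s.length - (2*L + 2) = 0 := by
        have := hL c; omega
      rw [e0, List.drop_zero] at h0
      have hr : 2*L + 2 - ((g c).length - s.length)
          = (L + 1) + (L + 1 - ((g c).length - s.length)) := by
        have := hL c; omega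
      rw [hr, List.replicate_add, List.append_assoc] at h0
      exact bar_a1 hL hx l' _ h0

/-- Case (b) helper. -/
lemma bar_b1 {g : A → List A} {x₀ z : A} {j₀ : ℕ}
    (hpure : ∀ c, ∃ x, ∀ y ∈ g c, y = x)
    (hne : ∀ c, g c ≠ [])
    (huniq : ∀ c, (∀ y ∈ g c, y = x₀) → g c = List.replicate j₀ x₀)
    (hz : z ≠ x₀) :
    ∀ (l : List A) (r : ℕ) (t : List A), ¬ j₀ ∣ r →
      applyList g l ≠ List.replicate r x₀ ++ z :: t := by
  intro l
  induction l with
  | nil =>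
    intro r t _ heq
    have := congrArg List.length heq
    simp at this
  | cons c l' ih =>
    intro r t hdvd heq
    have hr0 : 1 ≤ r := by
      rcases Nat.eq_zero_or_pos r with h | h
      · exact absurd (h ▸ Nat.dvd_zero j₀) hdvd
      · exact h
    rw [applyList_cons] at heq
    obtain ⟨x, hxpure⟩ := hpure c
    have hclen : 0 < (g c).length := List.length_pos_iff.mpr (hne c)
    have hfirst : (g c)[0] = x₀ := by
      have h1 : (g c ++ applyList g l')[0]'(by rw [List.length_append]; omega)
          = (g c)[0] := List.getElem_append_left hclen
      rw [List.getElem_of_eq heq] at h1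
      rw [List.getElem_append_left (by rw [List.length_replicate]; omega),
        List.getElem_replicate] at h1
      exact h1.symm
    have hxx : x = x₀ := by
      rw [← hfirst]; exact (hxpure _ (List.getElem_mem hclen)).symm
    have hgc : g c = List.replicate j₀ x₀ := huniq c (hxx ▸ hxpure)
    have hj0 : 1 ≤ j₀ := by
      by_contra hcon
      have hj : j₀ = 0 := by omega
      rw [hj] at hgc
      exact hne c (by simpa using hgc)
    have hgclen : (g c).length = j₀ := by rw [hgc, List.length_replicate]
    rcases le_or_gt j₀ r with hjr | hjr
    · -- strip a block
      have h0 : applyList g l'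
          = List.drop (g c).length (List.replicate r x₀ ++ z :: t) := by
        rw [← heq, List.drop_left]
      rw [hgclen, List.drop_append, List.drop_replicate,
        List.length_replicate, Nat.sub_eq_zero_of_le hjr, List.drop_zero] at h0
      refine ih (r - j₀) t (fun hd => hdvd ?_) h0
      have : r = (r - j₀) + j₀ := by omega
      rw [this]
      exact Nat.dvd_add hd dvd_rfl
    · -- r < j₀ : position r of the block is x₀ but should be z
      have hrc : r < (g c).length := by omega
      have h1 : (g c ++ applyList g l')[r]'(by rw [List.length_append]; omega)
          = (g c)[r] := List.getElem_append_left hrc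
      rw [List.getElem_of_eq heq] at h1
      rw [List.getElem_append_right (by rw [List.length_replicate])] at h1
      simp only [List.length_replicate, Nat.sub_self, List.getElem_cons_zero] at h1
      have h2 : (g c)[r] = x₀ := by
        rw [List.getElem_of_eq hgc, List.getElem_replicate]
      exact hz (h1.trans h2)

/-- Case (b): `z · x₀^(j₀+1) · z` is not an infix of any `applyList g l`. -/
lemma bar_b2 {g : A → List A} {x₀ z : A} {j₀ : ℕ}
    (hpure : ∀ c, ∃ x, ∀ y ∈ g c, y = x)
    (hne : ∀ c, g c ≠ [])
    (huniqx : ∀ c, (∀ y ∈ g c, y = x₀) → g c = List.replicate j₀ x₀)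
    (hz : z ≠ x₀) (hj₀ : 2 ≤ j₀) :
    ∀ (l s t : List A),
      applyList g l ≠ s ++ (z :: (List.replicate (j₀ + 1) x₀ ++ [z])) ++ t := by
  intro l
  induction l with
  | nil =>
    intro s t heq
    have := congrArg List.length heq
    simp at this
  | cons c l' ih =>
    intro s t heq
    rw [applyList_cons, List.append_assoc] at heq
    have h0 : applyList g l'
        = List.drop (g c).length
            (s ++ ((z :: (List.replicate (j₀ + 1) x₀ ++ [z])) ++ t)) := by
      rw [← heq, List.drop_left]
    rcases le_or_gt (g c).length s.length with h | h
    · rw [List.drop_append, Nat.sub_eq_zero_of_le h, List.drop_zero,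
        ← List.append_assoc] at h0
      exact ih _ _ h0
    · obtain ⟨x, hxpure⟩ := hpure c
      have hclen : 0 < (g c).length := List.length_pos_iff.mpr (hne c)
      -- the value at index s.length is z, so the block is pure z
      have hlenR : s.length < (s ++ ((z :: (List.replicate (j₀ + 1) x₀ ++ [z])) ++ t)).length := by
        rw [List.length_append]; simp
      have hgetR : (s ++ ((z :: (List.replicate (j₀ + 1) x₀ ++ [z])) ++ t))[s.length]'hlenR = z := by
        rw [List.getElem_append_right (le_refl s.length)]
        simp only [Nat.sub_self]
        rw [List.getElem_append_left (by simp)]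
        exact List.getElem_cons_zero _ _ _
      have hsel : (g c ++ applyList g l')[s.length]'(by rw [List.length_append]; omega)
          = (g c)[s.length] := List.getElem_append_left h
      rw [List.getElem_of_eq heq, hgetR] at hsel
      have hxz : x = z := by
        rw [← hsel.symm]
        exact (hxpure _ (List.getElem_mem h)).symm
      -- the block must end exactly at s.length + 1
      have hend : (g c).length = s.length + 1 := by
        by_contra hc
        have h2 : s.length + 1 < (g c).length := by omega
        have hgl : (g c ++ applyList g l')[s.length + 1]'(by rw [List.length_append]; omega)
            = z := by
          rw [List.getElem_append_left h2]
          rw [hxz] at hxpure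
          exact hxpure _ (List.getElem_mem h2)
        rw [List.getElem_of_eq heq] at hgl
        rw [List.getElem_append_right (Nat.le_succ s.length)] at hgl
        have e1 : s.length + 1 - s.length = 1 := by omega
        simp only [e1] at hgl
        rw [List.getElem_append_left (by simp)] at hgl
        rw [List.getElem_cons_succ] at hgl
        rw [List.getElem_append_left (by rw [List.length_replicate]; omega)] at hgl
        rw [List.getElem_replicate] at hgl
        exact hz hgl.symm
      -- strip and apply bar_b1
      rw [List.drop_append,
        List.drop_eq_nil_of_le (by omega), List.nil_append, hend] at h0
      have e1 : s.length + 1 - s.length = 1 := by omega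
      rw [e1] at h0
      have h2 : List.drop 1 ((z :: (List.replicate (j₀ + 1) x₀ ++ [z])) ++ t)
          = List.replicate (j₀ + 1) x₀ ++ z :: t := by
        simp [List.append_assoc]
      rw [h2] at h0
      refine bar_b1 hpure hne huniqx hz l' (j₀ + 1) t (fun hd => ?_) h0
      have h3 : j₀ ∣ 1 := (Nat.dvd_add_right dvd_rfl).mp hd
      have := Nat.le_of_dvd one_pos h3
      omega

end Stmt11Aux

namespace Stmt11Aux

open List

variable {A : Type u}

/-- Barrier existence: for any nonerasing substitution with a long image there
is a nonempty word that is never an infix of an image word. -/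
lemma exists_barrier [Fintype A] (hA : 2 ≤ Fintype.card A) (g : A → List A)
    (hne : ∀ c, g c ≠ []) (h2 : ∃ c, 2 ≤ (g c).length) :
    ∃ B : List A, B ≠ [] ∧ ∀ (l s t : List A), applyList g l ≠ s ++ B ++ t := by
  classical
  by_cases hall : ∀ x : A, ∃ c, ∀ y ∈ g c, y = x
  · -- case (b): every letter has a pure image; then all images are pure powers
    choose cx hcx using hall
    have hinj : Function.Injective cx := by
      intro x x' hxx
      have h1 : ∀ y ∈ g (cx x), y = x := hcx x
      have h2' : ∀ y ∈ g (cx x'), y = x' := hcx x'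
      rw [hxx] at h1
      obtain ⟨y, hy⟩ := List.exists_mem_of_ne_nil _ (hne (cx x'))
      rw [← h1 y hy, ← h2' y hy]
    have hsurj : Function.Surjective cx := (Finite.injective_iff_bijective.mp hinj).2
    have hpure : ∀ c, ∃ x, ∀ y ∈ g c, y = x := by
      intro c
      obtain ⟨x, rfl⟩ := hsurj c
      exact ⟨x, hcx x⟩
    -- uniqueness of the pure image for a given letter
    have key : ∀ x c, (∀ y ∈ g c, y = x) → g c = g (cx x) := by
      intro x c hc
      obtain ⟨x', rfl⟩ := hsurj c
      obtain ⟨y, hy⟩ := List.exists_mem_of_ne_nil _ (hne (cx x'))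
      have : x' = x := by rw [← hcx x' y hy, hc y hy]
      rw [this]
    obtain ⟨c₀, hc₀⟩ := h2
    obtain ⟨x₀, hx₀⟩ := hpure c₀
    have hgc₀ : g c₀ = g (cx x₀) := key x₀ c₀ hx₀
    set j₀ := (g (cx x₀)).length with hj₀def
    have hj₀ : 2 ≤ j₀ := by rw [hj₀def, ← hgc₀]; exact hc₀
    have huniqx : ∀ c, (∀ y ∈ g c, y = x₀) → g c = List.replicate j₀ x₀ := by
      intro c hc
      rw [key x₀ c hc, hj₀def]
      exact List.eq_replicate_of_mem (hcx x₀)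
    obtain ⟨z, hz⟩ := Fintype.exists_ne_of_one_lt_card (by omega) x₀
    refine ⟨z :: (List.replicate (j₀ + 1) x₀ ++ [z]), by simp, ?_⟩
    intro l s t
    exact bar_b2 hpure hne huniqx hz hj₀ l s t
  · -- case (a)
    push_neg at hall
    obtain ⟨x, hx⟩ := hall
    have hx' : ∀ c, ∃ y ∈ g c, y ≠ x := by
      intro c
      obtain ⟨y, hy, hyx⟩ := hx c
      exact ⟨y, hy, hyx⟩
    set L := Finset.univ.sup (fun c => (g c).length) with hLdef
    have hL : ∀ c, (g c).length ≤ L :=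
      fun c => Finset.le_sup (f := fun c => (g c).length) (Finset.mem_univ c)
    refine ⟨List.replicate (2*L + 2) x, by simp, ?_⟩
    intro l s t
    exact bar_a2 hL hx' l s t

/-- The magic word: it contains every letter, and for every nonerasing
substitution `g` with a long image, prefixes of the word of the form
`applyList g l` have bounded length. -/
lemma exists_magic [Fintype A] (hA : 2 ≤ Fintype.card A) :
    ∃ w₀ : ℕ → A, (∀ y : A, ∃ j, w₀ j = y) ∧
      ∀ g : A → List A, (∀ c, g c ≠ []) → (∃ c, 2 ≤ (g c).length) →
        ∃ N, ∀ l : List A, PrefixOf (applyList g l) w₀ → (applyList g l).length ≤ N := by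
  classical
  have hnA : Nonempty A := by
    rw [← Fintype.card_pos_iff]; omega
  obtain ⟨a₀⟩ := hnA
  have hcount : Countable (A → List A) := inferInstance
  obtain ⟨e, he⟩ := exists_surjective_nat (A → List A)
  -- the barrier associated to an index
  let bar : (A → List A) → List A := fun g =>
    if h : (∀ c, g c ≠ []) ∧ (∃ c, 2 ≤ (g c).length) then
      Classical.choose (exists_barrier hA g h.1 h.2)
    else [a₀]
  have bar_ne : ∀ g, bar g ≠ [] := by
    intro g
    by_cases h : (∀ c, g c ≠ []) ∧ (∃ c, 2 ≤ (g c).length)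
    · simp only [bar, dif_pos h]
      exact (Classical.choose_spec (exists_barrier hA g h.1 h.2)).1
    · simp only [bar, dif_neg h]; simp
  have bar_spec : ∀ g, (∀ c, g c ≠ []) → (∃ c, 2 ≤ (g c).length) →
      ∀ (l s t : List A), applyList g l ≠ s ++ bar g ++ t := by
    intro g h1 h2
    have h : (∀ c, g c ≠ []) ∧ (∃ c, 2 ≤ (g c).length) := ⟨h1, h2⟩
    simp only [bar, dif_pos h]
    exact (Classical.choose_spec (exists_barrier hA g h.1 h.2)).2
  -- segments
  let seg : ℕ → List A := fun i => Nat.casesOn i (Finset.univ (α := A)).toList (fun j => bar (e j))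
  have seg0 : seg 0 = (Finset.univ (α := A)).toList := rfl
  have seg_ne : ∀ i, seg i ≠ [] := by
    intro i
    cases i with
    | zero =>
      rw [seg0]
      intro h
      have h2 : (Finset.univ (α := A)).toList.length = Fintype.card A := by
        simp [Finset.length_toList]
      rw [h] at h2
      simp at h2
      omega
    | succ j => exact bar_ne (e j)
  let pre : ℕ → List A := fun n => (List.range n).flatMap seg
  have pre_succ : ∀ n, pre (n+1) = pre n ++ seg n := by
    intro n
    simp only [pre, List.range_succ, List.flatMap_append, List.flatMap_cons, List.flatMap_nil,
      List.append_nil]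
  have pre_len : ∀ n, n ≤ (pre n).length := by
    intro n
    induction n with
    | zero => simp
    | succ n ih =>
      rw [pre_succ, List.length_append]
      have : 1 ≤ (seg n).length := List.length_pos_iff.mpr (seg_ne n)
      omega
  have pre_prefix : ∀ m n, m ≤ n → pre m <+: pre n := by
    intro m n h
    induction n with
    | zero => rw [Nat.le_zero.mp h]
    | succ n ih =>
      rcases Nat.lt_or_ge m (n+1) with h1 | h1
      · refine (ih (by omega)).trans ?_
        rw [pre_succ]
        exact List.prefix_append _ _
      · have : m = n + 1 := by omega
        rw [this]
  -- the word
  let w₀ : ℕ → A := fun n => (pre (n+1)).getD n a₀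
  have w₀_spec : ∀ (i n : ℕ) (h : n < (pre i).length), (pre i)[n] = w₀ n := by
    intro i n h
    have h2 : n < (pre (n+1)).length := lt_of_lt_of_le (Nat.lt_succ_self n) (pre_len (n+1))
    rcases le_total i (n+1) with hle | hle
    · have hp := pre_prefix i (n+1) hle
      have := hp.getElem h
      simp only [w₀, List.getD_eq_getElem _ _ h2]
      rw [this]
    · have hp := pre_prefix (n+1) i hle
      have := hp.getElem h2
      simp only [w₀, List.getD_eq_getElem _ _ h2]
      rw [← this]
  have seg_pos : ∀ (i o : ℕ) (h : o < (seg i).length), w₀ ((pre i).length + o) = (seg i)[o] := by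
    intro i o h
    have hlen : (pre i).length + o < (pre (i+1)).length := by
      rw [pre_succ, List.length_append]; omega
    rw [← w₀_spec (i+1) _ hlen]
    rw [List.getElem_of_eq (pre_succ i)]
    rw [List.getElem_append_right (by omega)]
    congr 1
    omega
  refine ⟨w₀, ?_, ?_⟩
  · -- all letters occur
    intro y
    have hy : y ∈ seg 0 := by
      rw [seg0, Finset.mem_toList]
      exact Finset.mem_univ y
    obtain ⟨o, ho, hoy⟩ := List.mem_iff_getElem.mp hy
    refine ⟨o, ?_⟩
    have := seg_pos 0 o ho
    simp only [pre, List.range_zero, List.flatMap_nil, List.length_nil, Nat.zero_add] at this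
    rw [this, hoy]
  · -- the barrier property
    intro g hg1 hg2
    obtain ⟨i, hi⟩ := he g
    refine ⟨(pre (i+2)).length, ?_⟩
    intro l hl
    by_contra hlen
    push_neg at hlen
    -- extract the barrier as an infix of applyList g l
    set p := applyList g l with hp
    set B := seg (i+1) with hB
    have hBbar : B = bar g := by rw [hB, ← hi]
    set P := (pre (i+1)).length with hP
    have hPB : P + B.length ≤ p.length := by
      have : (pre (i+2)).length = P + B.length := by
        rw [show i + 2 = (i+1) + 1 from rfl, pre_succ, List.length_append]
      omega
    -- B equals the slice of p starting at P
    have hslice : ∀ (o : ℕ) (ho : o < B.length), B[o] = p[P + o]'(by omega) := by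
      intro o ho
      have h1 : p[P + o]'(by omega) = w₀ (P + o) := hl (P + o) (by omega)
      rw [h1]
      exact (seg_pos (i+1) o ho).symm
    have hBeq : B = (p.drop P).take B.length := by
      apply List.ext_getElem
      · rw [List.length_take, List.length_drop]; omega
      · intro o h1 h2
        rw [List.getElem_take, List.getElem_drop]
        exact hslice o h1
    have hsplit : p = p.take P ++ B ++ p.drop (P + B.length) := by
      nth_rewrite 1 [hBeq]
      rw [← List.take_add]
      exact (List.take_append_drop _ _).symm
    exact bar_spec g hg1 hg2 l (p.take P) (p.drop (P + B.length)) (by rw [← hBbar, ← hsplit])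

end Stmt11Aux

open Stmt11Aux in
/-- for `#A ≥ 2`, no set of substitutions has `A^ω` as its set of
S-adic words; and any `S` with `A^ω = Stab(S)` contains a permutation. -/
theorem stmt11 {A : Type u} [Fintype A] (hA : 2 ≤ Fintype.card A) :
    (¬ ∃ S : Set (A → List A), (∀ f ∈ S, ∀ a, f a ≠ []) ∧
        ∀ w : ℕ → A, ∃ σ, (∀ n, σ n ∈ S) ∧ SAdicWith σ w) ∧
      ∀ S : Set (A → List A), (∀ f ∈ S, ∀ a, f a ≠ []) →
        (∀ w : ℕ → A, InStable S w) →
        ∃ f ∈ S, Set.range f = Set.range (fun b : A => [b]) := by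
  obtain ⟨w₀, hletters, magic⟩ := exists_magic hA
  constructor
  · -- Part 1
    rintro ⟨S, hne, hall⟩
    obtain ⟨σ, hσS, a, hpref, hunb⟩ := hall w₀
    have hσne : ∀ n c, σ n c ≠ [] := fun n c => hne _ (hσS n) c
    by_cases hbig : ∃ m c, 2 ≤ (compSeq σ m c).length
    · obtain ⟨m, c₀, hc₀⟩ := hbig
      obtain ⟨N, hN⟩ := magic (compSeq σ m) (compSeq_ne_nil hσne m) ⟨c₀, hc₀⟩
      set M := (Finset.range m).sup (fun n => (compSeq σ n (a n)).length) with hM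
      obtain ⟨n, hn⟩ := hunb (max N M + 1)
      rcases Nat.lt_or_ge n m with h | h
      · have : (compSeq σ n (a n)).length ≤ M :=
          Finset.le_sup (f := fun n => (compSeq σ n (a n)).length) (Finset.mem_range.mpr h)
        have := le_max_right N M
        omega
      · obtain ⟨d, rfl⟩ := Nat.exists_eq_add_of_le h
        have heq := compSeq_shift σ m d (a (m + d))
        have hp : PrefixOf (applyList (compSeq σ m) (compSeq (fun i => σ (m + i)) d (a (m + d)))) w₀ := by
          rw [← heq]; exact hpref (m + d)
        have hb := hN _ hp
        rw [← heq] at hb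
        have := le_max_left N M
        omega
    · push_neg at hbig
      obtain ⟨n, hn⟩ := hunb 2
      have := hbig n (a n)
      omega
  · -- Part 2
    intro S hne hstab
    obtain ⟨σ, ws, hσS, hws0, hAE⟩ := hstab w₀
    have hσne : ∀ n c, σ n c ≠ [] := fun n c => hne _ (hσS n) c
    -- prefixes of the magic word
    have Pm : ∀ m t i (hi : i < (applyList (compSeq σ m) (prefList (ws m) t)).length),
        (applyList (compSeq σ m) (prefList (ws m) t))[i] = w₀ i := by
      intro m
      induction m with
      | zero =>
        intro t i hi
        have e : applyList (compSeq σ 0) (prefList (ws 0) t) = prefList w₀ t := by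
          rw [show compSeq σ 0 = (fun a : A => [a]) from rfl, applyList_id, hws0]
        rw [List.getElem_of_eq e]
        exact prefList_getElem _ _ _ _
      | succ m ih =>
        intro t i hi
        have e : applyList (compSeq σ (m+1)) (prefList (ws (m+1)) t)
            = applyList (compSeq σ m) (applyList (σ m) (prefList (ws (m+1)) t)) := by
          rw [applyList_applyList]
          congr 1
        rw [List.getElem_of_eq e]
        rw [e] at hi
        set q := applyList (σ m) (prefList (ws (m+1)) t) with hq
        have hq2 : q = prefList (ws m) q.length :=
          eq_prefList (fun j hj => applyEq_prefList (hAE m) t j hj)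
        rw [List.getElem_of_eq (congrArg _ hq2)]
        rw [congrArg (fun z => (applyList (compSeq σ m) z).length) hq2] at hi
        exact ih q.length i hi
    -- every occurring letter has a singleton image
    have step1 : ∀ m i, (compSeq σ m (ws m i)).length = 1 := by
      intro m i
      by_contra hlen
      have h1 : compSeq σ m (ws m i) ≠ [] := compSeq_ne_nil hσne m _
      have h2 : 2 ≤ (compSeq σ m (ws m i)).length := by
        have := List.length_pos_iff.mpr h1
        omega
      obtain ⟨N, hN⟩ := magic (compSeq σ m) (compSeq_ne_nil hσne m) ⟨ws m i, h2⟩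
      have hp : PrefixOf (applyList (compSeq σ m) (prefList (ws m) (N+1))) w₀ :=
        fun j hj => Pm m (N+1) j hj
      have hb := hN _ hp
      have hlow : N + 1 ≤ (applyList (compSeq σ m) (prefList (ws m) (N+1))).length := by
        have := length_le_applyList (compSeq_ne_nil hσne m) (prefList (ws m) (N+1))
        rw [prefList_length] at this
        exact this
      omega
    -- the image of the occurring letter at position t is [w₀ t]
    have E1 : ∀ m t, compSeq σ m (ws m t) = [w₀ t] := by
      have prod : ∀ m t, applyList (compSeq σ m) (prefList (ws m) t) = prefList w₀ t := by
        intro m t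
        induction t with
        | zero => simp [prefList]
        | succ t ih =>
          rw [prefList_succ, applyList_append, ih, applyList_singleton]
          obtain ⟨β, hβ⟩ := List.length_eq_one_iff.mp (step1 m t)
          have hval : β = w₀ t := by
            have hlen : t < (applyList (compSeq σ m) (prefList (ws m) (t+1))).length := by
              rw [prefList_succ, applyList_append, ih, applyList_singleton, hβ,
                List.length_append, prefList_length]
              simp
            have := Pm m (t+1) t hlen
            rw [List.getElem_of_eq (by rw [prefList_succ, applyList_append, ih,
              applyList_singleton, hβ] : applyList (compSeq σ m) (prefList (ws m) (t+1))
                = prefList w₀ t ++ [β])] at this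
            rw [List.getElem_append_right (by rw [prefList_length])] at this
            simpa using this
          rw [hβ, hval, prefList_succ]
      intro m t
      have h1 := prod m (t+1)
      rw [prefList_succ, applyList_append, prod m t, applyList_singleton, prefList_succ] at h1
      exact List.append_cancel_left h1
    -- σ m sends occurring letters to singletons
    have step4 : ∀ m i, σ m (ws (m+1) i) = [w₀ i] ∨
        (∃ d, σ m (ws (m+1) i) = [d] ∧ compSeq σ m d = [w₀ i]) := by
      intro m i
      right
      have h1 : applyList (compSeq σ m) (σ m (ws (m+1) i)) = [w₀ i] := E1 (m+1) i
      have hlen : (σ m (ws (m+1) i)).length = 1 := by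
        have h2 := length_le_applyList (compSeq_ne_nil hσne m) (σ m (ws (m+1) i))
        rw [h1] at h2
        have h3 : σ m (ws (m+1) i) ≠ [] := hσne m _
        have := List.length_pos_iff.mpr h3
        simp at h2
        omega
      obtain ⟨d, hd⟩ := List.length_eq_one_iff.mp hlen
      refine ⟨d, hd, ?_⟩
      rw [hd, applyList_singleton] at h1
      exact h1
    -- every letter occurs in every ws m
    have occ_full : ∀ m (c : A), ∃ j, ws m j = c := by
      intro m c
      classical
      set Sf : Finset A := Finset.univ.filter (fun c => ∃ j, ws m j = c) with hSf
      set θ : A → A := fun c => (compSeq σ m c).getD 0 c with hθ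
      have hsub : Finset.univ ⊆ Sf.image θ := by
        intro y _
        obtain ⟨j, hj⟩ := hletters y
        refine Finset.mem_image.mpr ⟨ws m j, ?_, ?_⟩
        · rw [hSf, Finset.mem_filter]
          exact ⟨Finset.mem_univ _, j, rfl⟩
        · rw [hθ]
          simp only [E1 m j]
          simpa using hj
      have hcard : Fintype.card A ≤ Sf.card := by
        calc Fintype.card A = Finset.univ.card := (Finset.card_univ).symm
        _ ≤ (Sf.image θ).card := Finset.card_le_card hsub
        _ ≤ Sf.card := Finset.card_image_le
      have : Sf = Finset.univ := Finset.eq_univ_of_card Sf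
        (le_antisymm (Finset.card_le_univ Sf) hcard)
      have hc : c ∈ Sf := this ▸ Finset.mem_univ c
      rw [hSf, Finset.mem_filter] at hc
      exact hc.2
    -- σ 0 is the desired permutation
    refine ⟨σ 0, hσS 0, ?_⟩
    have key : ∀ i, σ 0 (ws 1 i) = [w₀ i] := by
      intro i
      rcases step4 0 i with h | ⟨d, hd, hcd⟩
      · exact h
      · rw [show compSeq σ 0 d = [d] from rfl] at hcd
        rw [hd, hcd]
    apply Set.eq_of_subset_of_subset
    · rintro v ⟨c, rfl⟩
      obtain ⟨j, hj⟩ := occ_full 1 c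
      rw [← hj, key j]
      exact ⟨w₀ j, rfl⟩
    · rintro v ⟨y, rfl⟩
      obtain ⟨j, hj⟩ := hletters y
      exact ⟨ws 1 j, by rw [key j, hj]⟩
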